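/- Let A be a magmatic algebra over a field K with a reduced unital-infinitesimal coproduct δ. If x, y, z ∈ A are primitive, then the associator as(x,y,z) = (x·y)·z − x·(y·z) is primitive: δ(as(x,y,z)) = 0. -/
import Mathlib


open TensorProduct

/-- A K-linear map `δ : A → A ⊗ A` satisfies the reduced unital-infinitesimal
compatibility relation if
`δ(a·b) = (id ⊗ mulRight b)(δ a) + (mulLeft a ⊗ id)(δ b) + a ⊗ b` for all `a b`. -/
def IsUICoproduct (K : Type*) [Field K] (A : Type*) [NonUnitalNonAssocRing A]
    [Module K A] [SMulCommClass K A A] [IsScalarTower K A A]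
    (δ : A →ₗ[K] A ⊗[K] A) : Prop :=
  ∀ a b : A,
    δ (a * b) =
      TensorProduct.map LinearMap.id (LinearMap.mulRight K b) (δ a) +
      TensorProduct.map (LinearMap.mulLeft K a) LinearMap.id (δ b) +
      a ⊗ₜ[K] b

/-- The associator of three primitive elements is primitive. -/
theorem ui_coproduct_associator_primitive
    (K : Type*) [Field K] (A : Type*) [NonUnitalNonAssocRing A]
    [Module K A] [SMulCommClass K A A] [IsScalarTower K A A]
    (δ : A →ₗ[K] A ⊗[K] A) (hui : IsUICoproduct K A δ)
    (x y z : A) (hx : δ x = 0) (hy : δ y = 0) (hz : δ z = 0) :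
    δ ((x * y) * z - x * (y * z)) = 0 := by
  have hxy : δ (x * y) = x ⊗ₜ[K] y := by
    rw [hui x y, hx, hy]; simp
  have hyz : δ (y * z) = y ⊗ₜ[K] z := by
    rw [hui y z, hy, hz]; simp
  rw [map_sub, hui (x * y) z, hui x (y * z), hxy, hyz, hz, hx]
  simp [TensorProduct.map_tmul]
  abel
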